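/- Let P be a submonoid of a (discrete) group G. There is a unital algebra isomorphism ψ from 𝒯_λ(P)⁺ onto 𝒯̄_λ(P)⁺ with ψ(L_p) = L̄_p for all p ∈ P, which is completely isometric: for every n ≥ 1, the induced map on n×n matrices over these algebras is isometric. -/

import Mathlib

noncomputable section
set_option synthInstance.maxHeartbeats 1000000
set_option maxHeartbeats 1000000
set_option linter.unusedVariables false

open scoped ENNReal

/-- `ℓ²(ι)` with complex coefficients. -/
abbrev l2 (ι : Type*) : Type _ := lp (fun _ : ι => ℂ) 2

/-- The canonical orthonormal basis vector `δ_i` of `ℓ²(ι)`. -/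
noncomputable def ket {ι : Type*} (i : ι) : l2 ι :=
  haveI := Classical.decEq ι
  lp.single 2 i 1

variable {G : Type*} [Group G]

/-- A word `a = (p₁, p₂, …, p_{2k-1}, p_{2k})` of even length over `P`, recorded as the list of
its consecutive pairs `(p₁,p₂), (p₃,p₄), …, (p_{2k-1},p_{2k})`. -/
abbrev Word (P : Submonoid G) := List (P × P)

/-- `ȧ = p₁⁻¹ p₂ ⋯ p_{2k-1}⁻¹ p_{2k} ∈ G`. -/
def wordElem (P : Submonoid G) (w : Word P) : G :=
  (w.map (fun pq => ((pq.1 : G))⁻¹ * (pq.2 : G))).prod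

/-- A word is neutral if `ȧ = e`. -/
def IsNeutral (P : Submonoid G) (w : Word P) : Prop := wordElem P w = 1

/-- `V̇_a = V_{p₁}^* V_{p₂} ⋯ V_{p_{2k-1}}^* V_{p_{2k}}`. -/
def dotted {A : Type*} [Monoid A] [Star A] (P : Submonoid G) (V : P → A) (w : Word P) : A :=
  (w.map (fun pq => star (V pq.1) * V pq.2)).prod

/-- The constructible right ideal `K(a) = {p ∈ P : L̇_a δ_p = δ_p}`, where `L` is the left
regular representation of `P` on `ℓ²(P)`. -/
def KIdeal (P : Submonoid G) (L : P → (l2 P →L[ℂ] l2 P)) (w : Word P) : Set P :=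
  {p : P | dotted P L w (ket p) = ket p}

/-- The index set `X = ⨿_{n ≥ 1} Pⁿ` underlying `ℋ̄ = ⊕_{n≥1} ℓ²(P)^{⊗n} ≅ ℓ²(X)`. -/
abbrev PTuples (P : Submonoid G) := Σ n : ℕ, Fin (n + 1) → P

/-- Coordinatewise left multiplication of a tuple by `p`; `L̄_p δ_x = δ_{p • x}`. -/
def pMul (P : Submonoid G) (p : P) (x : PTuples P) : PTuples P := ⟨x.1, fun i => p * x.2 i⟩

/-- The operator on the `n`-fold Hilbert-space direct sum `H^n` (with its `ℓ²`-norm) induced by an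
`n × n` matrix of bounded operators on `H`; used to express matrix amplifications. -/
noncomputable def amp {H : Type*} [NormedAddCommGroup H] [InnerProductSpace ℂ H] {n : ℕ}
    (T : Fin n → Fin n → (H →L[ℂ] H)) :
    PiLp 2 (fun _ : Fin n => H) →L[ℂ] PiLp 2 (fun _ : Fin n => H) :=
  (PiLp.continuousLinearEquiv 2 ℂ (fun _ : Fin n => H)).symm.toContinuousLinearMap ∘L
    ContinuousLinearMap.pi
      (fun i => ∑ j, (T i j) ∘L (PiLp.proj (𝕜 := ℂ) 2 (fun _ : Fin n => H) j))

variable {ι κ : Type*}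

lemma ket_apply_self (i : ι) : (ket i : l2 ι) i = 1 := by
  rw [ket]; exact @lp.single_apply_self ι (fun _ : ι => ℂ) _ (Classical.decEq ι) 2 i 1

lemma ket_apply_ne {i j : ι} (h : j ≠ i) : (ket i : l2 ι) j = 0 := by
  rw [ket]; exact @lp.single_apply_ne ι (fun _ : ι => ℂ) _ (Classical.decEq ι) 2 i 1 _ h

lemma ket_apply [DecidableEq ι] (i j : ι) : (ket i : l2 ι) j = if j = i then 1 else 0 := by
  by_cases h : j = i
  · subst h; simp [ket_apply_self]
  · simp [ket_apply_ne h, h]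

lemma single_eq_ket {inst : DecidableEq ι} (i : ι) : (lp.single 2 i (1:ℂ) : l2 ι) = ket i := by
  apply lp.ext
  funext j
  by_cases h : j = i
  · subst h; rw [lp.single_apply_self, ket_apply_self]
  · rw [lp.single_apply_ne _ _ _ h, ket_apply_ne h]

lemma two_toReal : (2 : ℝ≥0∞).toReal = 2 := by simp

lemma hasSum_norm_sq (f : l2 ι) : HasSum (fun i => ‖f i‖ ^ 2) (‖f‖ ^ 2) := by
  have h := lp.hasSum_norm (p := 2) (E := fun _ : ι => ℂ) (by rw [two_toReal]; norm_num) f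
  rw [two_toReal] at h
  have e2 : ∀ x : ℝ, x ^ (2:ℝ) = x ^ 2 := fun x => by
    rw [show (2:ℝ) = ((2:ℕ):ℝ) by norm_num, Real.rpow_natCast]
  simpa only [e2] using h

lemma norm_sq_eq_tsum (f : l2 ι) : ‖f‖ ^ 2 = ∑' i, ‖f i‖ ^ 2 :=
  (hasSum_norm_sq f).tsum_eq.symm

lemma summable_norm_sq (f : l2 ι) : Summable (fun i => ‖f i‖ ^ 2) :=
  (hasSum_norm_sq f).summable

lemma memℓp_of_summable {f : ι → ℂ} (h : Summable (fun i => ‖f i‖ ^ 2)) :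
    Memℓp f 2 := by
  apply memℓp_gen
  rw [two_toReal]
  have e2 : ∀ x : ℝ, x ^ (2:ℝ) = x ^ 2 := fun x => by
    rw [show (2:ℝ) = ((2:ℕ):ℝ) by norm_num, Real.rpow_natCast]
  simpa only [e2] using h

lemma norm_eq_of_sq_eq {a b : ℝ} (ha : 0 ≤ a) (hb : 0 ≤ b) (h : a ^ 2 = b ^ 2) : a = b := by
  nlinarith

lemma le_of_sq_le_sq' {a b : ℝ} (hb : 0 ≤ b) (h : a ^ 2 ≤ b ^ 2) (ha : 0 ≤ a) : a ≤ b := by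
  nlinarith

lemma dense_span_ket : Dense (↑(Submodule.span ℂ (Set.range (ket : ι → l2 ι))) : Set (l2 ι)) := by
  classical
  let B : HilbertBasis ι ℂ (l2 ι) := HilbertBasis.ofRepr (LinearIsometryEquiv.refl ℂ _)
  have hB : ⇑B = (ket : ι → l2 ι) := by
    funext i
    show B.repr.symm (lp.single 2 i 1) = ket i
    have : B.repr = LinearIsometryEquiv.refl ℂ (l2 ι) := rfl
    rw [this]
    exact single_eq_ket i
  have h := B.dense_span
  rw [hB] at h
  exact Submodule.dense_iff_topologicalClosure_eq_top.mpr h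

/-- Two continuous linear maps agreeing on kets agree. -/
lemma clm_ext_ket {E : Type*} [NormedAddCommGroup E] [NormedSpace ℂ E]
    {A B : l2 ι →L[ℂ] E} (h : ∀ i, A (ket i) = B (ket i)) : A = B := by
  apply ContinuousLinearMap.ext_on dense_span_ket
  rintro x ⟨i, rfl⟩
  exact h i


section Embed
open Classical

variable {ι κ : Type*} {α β : Type*}

def extFun (f : ι → κ) (ξ : l2 ι) : κ → ℂ :=
  fun k => if h : ∃ i, f i = k then ξ h.choose else 0

lemma extFun_apply_mem {f : ι → κ} (hf : Function.Injective f) (ξ : l2 ι) (i : ι) :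
    extFun f ξ (f i) = ξ i := by
  have h : ∃ i', f i' = f i := ⟨i, rfl⟩
  rw [extFun]
  rw [dif_pos h]
  exact congrArg (fun t => ξ t) (hf h.choose_spec)

lemma extFun_apply_not (f : ι → κ) (ξ : l2 ι) {k : κ} (h : k ∉ Set.range f) :
    extFun f ξ k = 0 := by
  rw [extFun, dif_neg]
  rintro ⟨i, rfl⟩
  exact h ⟨i, rfl⟩

lemma extFun_hasSum {f : ι → κ} (hf : Function.Injective f) (ξ : l2 ι) :
    HasSum (fun k => ‖extFun f ξ k‖ ^ 2) (‖ξ‖ ^ 2) := by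
  refine (hf.hasSum_iff ?_).mp ?_
  · intro k hk
    rw [extFun_apply_not f ξ hk]
    simp
  · have : ((fun k => ‖extFun f ξ k‖ ^ 2) ∘ f) = fun i => ‖ξ i‖ ^ 2 := by
      funext i
      simp [Function.comp, extFun_apply_mem hf]
    rw [this]
    exact hasSum_norm_sq ξ

/-- The isometric embedding of `ℓ²` spaces induced by an injection of index sets. -/
noncomputable def embed (f : ι → κ) (hf : Function.Injective f) : l2 ι →ₗᵢ[ℂ] l2 κ where
  toLinearMap :=
  { toFun := fun ξ => ⟨extFun f ξ, memℓp_of_summable (extFun_hasSum hf ξ).summable⟩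
    map_add' := by
      intro ξ η
      apply lp.ext
      funext k
      show extFun f (ξ + η) k = extFun f ξ k + extFun f η k
      rw [extFun, extFun, extFun]
      split_ifs with h
      · simp [lp.coeFn_add]
      · simp
    map_smul' := by
      intro c ξ
      apply lp.ext
      funext k
      show extFun f (c • ξ) k = c • extFun f ξ k
      rw [extFun, extFun]
      split_ifs with h
      · simp [lp.coeFn_smul]
      · simp }
  norm_map' := fun ξ =>
    norm_eq_of_sq_eq (norm_nonneg _) (norm_nonneg _)
      ((hasSum_norm_sq _).unique (extFun_hasSum hf ξ))

lemma embed_apply (f : ι → κ) (hf : Function.Injective f) (ξ : l2 ι) (k : κ) :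
    (embed f hf ξ : l2 κ) k = extFun f ξ k := rfl

lemma embed_ket (f : ι → κ) (hf : Function.Injective f) (i : ι) :
    embed f hf (ket i) = ket (f i) := by
  apply lp.ext
  funext k
  rw [embed_apply]
  by_cases h : ∃ i', f i' = k
  · obtain ⟨i', rfl⟩ := h
    rw [extFun_apply_mem hf]
    by_cases h' : i' = i
    · subst h'; rw [ket_apply_self, ket_apply_self]
    · rw [ket_apply_ne h', ket_apply_ne (fun hc => h' (hf hc))]
  · rw [extFun_apply_not f _ (fun hc => h (by rwa [Set.mem_range] at hc)),
      ket_apply_ne]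
    rintro rfl
    exact h ⟨i, rfl⟩

/-- Slicing an `ℓ²` function on a product index along the first coordinate. -/
noncomputable def sliceL (b : β) : l2 (β × α) →L[ℂ] l2 α :=
  LinearMap.mkContinuous
    { toFun := fun η => ⟨fun a => η (b, a),
        memℓp_of_summable ((summable_norm_sq η).comp_injective
          (fun a a' h => by cases h; rfl))⟩
      map_add' := by
        intro ξ η; apply lp.ext; funext a
        show (ξ + η) (b, a) = ξ (b, a) + η (b, a)
        simp [lp.coeFn_add]
      map_smul' := by
        intro c ξ; apply lp.ext; funext a
        show (c • ξ) (b, a) = c • ξ (b, a)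
        simp [lp.coeFn_smul] }
    1
    (by
      intro η
      rw [one_mul]
      refine le_of_sq_le_sq' (norm_nonneg _) ?_ (norm_nonneg _)
      rw [norm_sq_eq_tsum, norm_sq_eq_tsum]
      refine Summable.tsum_le_tsum_of_inj (fun a => (b, a)) (fun a a' h => by cases h; rfl)
        (fun _ _ => by positivity) (fun a => le_of_eq rfl)
        ?_ (summable_norm_sq η)
      exact (summable_norm_sq η).comp_injective (fun a a' h => by cases h; rfl))

lemma sliceL_apply (b : β) (η : l2 (β × α)) (a : α) : (sliceL b η : l2 α) a = η (b, a) := rfl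

lemma sliceL_hasSum (η : l2 (β × α)) (b : β) :
    HasSum (fun a => ‖η (b, a)‖ ^ 2) (‖(sliceL b η : l2 α)‖ ^ 2) := by
  have := hasSum_norm_sq (sliceL b η : l2 α)
  simpa [sliceL_apply] using this

lemma sliceL_parseval (η : l2 (β × α)) :
    HasSum (fun b => ‖(sliceL b η : l2 α)‖ ^ 2) (‖η‖ ^ 2) :=
  (hasSum_norm_sq η).prod_fiberwise (sliceL_hasSum η)

lemma sliceL_ket (b : β) (c : β) (a : α) :
    sliceL b (ket (c, a)) = if c = b then (ket a : l2 α) else 0 := by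
  apply lp.ext
  funext a'
  by_cases h : c = b
  · subst h
    rw [if_pos rfl, sliceL_apply]
    by_cases h' : a' = a
    · subst h'; rw [ket_apply_self, ket_apply_self]
    · rw [ket_apply_ne h', ket_apply_ne (fun hc => h' (congrArg Prod.snd hc))]
  · rw [if_neg h, sliceL_apply, ket_apply_ne (fun hc => h (congrArg Prod.fst hc).symm)]
    symm
    exact congrFun (lp.coeFn_zero _ _) a'

end Embed

section Amp

variable {H H' : Type*} [NormedAddCommGroup H] [InnerProductSpace ℂ H]
  [NormedAddCommGroup H'] [InnerProductSpace ℂ H'] {n : ℕ}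

lemma amp_apply (T : Fin n → Fin n → (H →L[ℂ] H)) (v : PiLp 2 (fun _ : Fin n => H)) (i : Fin n) :
    amp T v i = ∑ j, T i j (v j) := by
  simp [amp, ContinuousLinearMap.pi, PiLp.proj]

lemma pi_norm_sq (v : PiLp 2 (fun _ : Fin n => H)) : ‖v‖ ^ 2 = ∑ i, ‖v i‖ ^ 2 :=
  PiLp.norm_sq_eq_of_L2 _ v

lemma sum_sq_le_sq_sum {γ : Type*} {s : Finset γ} {f : γ → ℝ} (hf : ∀ i ∈ s, 0 ≤ f i) :
    ∑ i ∈ s, (f i) ^ 2 ≤ (∑ i ∈ s, f i) ^ 2 := by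
  calc ∑ i ∈ s, f i ^ 2 = ∑ i ∈ s, f i * f i := by simp [sq]
  _ ≤ ∑ i ∈ s, f i * (∑ j ∈ s, f j) := Finset.sum_le_sum (fun i hi =>
      mul_le_mul_of_nonneg_left (Finset.single_le_sum hf hi) (hf i hi))
  _ = (∑ i ∈ s, f i) ^ 2 := by rw [← Finset.sum_mul, sq]

lemma amp_norm_le (T : Fin n → Fin n → (H →L[ℂ] H)) :
    ‖amp T‖ ≤ ∑ i, ∑ j, ‖T i j‖ := by
  refine ContinuousLinearMap.opNorm_le_bound _ (by positivity) ?_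
  intro v
  have hv : ∀ j, ‖v j‖ ≤ ‖v‖ := by
    intro j
    refine le_of_sq_le_sq' (norm_nonneg _) ?_ (norm_nonneg _)
    rw [pi_norm_sq]
    exact Finset.single_le_sum (f := fun i => ‖v i‖ ^ 2) (fun i _ => sq_nonneg _) (Finset.mem_univ j)
  have h1 : ∀ i, ‖amp T v i‖ ≤ (∑ j, ‖T i j‖) * ‖v‖ := by
    intro i
    rw [amp_apply]
    calc ‖∑ j, T i j (v j)‖ ≤ ∑ j, ‖T i j (v j)‖ := norm_sum_le _ _
    _ ≤ ∑ j, ‖T i j‖ * ‖v‖ := by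
        refine Finset.sum_le_sum fun j _ => ?_
        exact ((T i j).le_opNorm (v j)).trans
          (mul_le_mul_of_nonneg_left (hv j) (norm_nonneg _))
    _ = (∑ j, ‖T i j‖) * ‖v‖ := (Finset.sum_mul _ _ _).symm
  refine le_of_sq_le_sq' (by positivity) ?_ (norm_nonneg _)
  rw [pi_norm_sq, mul_pow]
  calc ∑ i, ‖amp T v i‖ ^ 2 ≤ ∑ i, ((∑ j, ‖T i j‖) * ‖v‖) ^ 2 :=
      Finset.sum_le_sum (fun i _ => pow_le_pow_left₀ (norm_nonneg _) (h1 i) 2)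
  _ = (∑ i, (∑ j, ‖T i j‖) ^ 2) * ‖v‖ ^ 2 := by
      simp only [mul_pow]; rw [← Finset.sum_mul]
  _ ≤ (∑ i, ∑ j, ‖T i j‖) ^ 2 * ‖v‖ ^ 2 := by
      have := sum_sq_le_sq_sum (s := (Finset.univ : Finset (Fin n)))
        (f := fun i => ∑ j, ‖T i j‖) (fun i _ => by positivity)
      exact mul_le_mul_of_nonneg_right this (sq_nonneg _)

lemma amp_sub (S T : Fin n → Fin n → (H →L[ℂ] H)) :
    amp (fun i j => S i j - T i j) = amp S - amp T := by
  refine ContinuousLinearMap.ext fun v => ?_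
  refine PiLp.ext fun i => ?_
  have : (amp S - amp T) v i = amp S v i - amp T v i := rfl
  rw [this, amp_apply, amp_apply, amp_apply, ← Finset.sum_sub_distrib]
  exact Finset.sum_congr rfl (fun j _ => rfl)

lemma amp_le_of_isometry (J : H →ₗᵢ[ℂ] H') (T : Fin n → Fin n → (H →L[ℂ] H))
    (T' : Fin n → Fin n → (H' →L[ℂ] H'))
    (hJT : ∀ i j v, J (T i j v) = T' i j (J v)) : ‖amp T‖ ≤ ‖amp T'‖ := by
  refine ContinuousLinearMap.opNorm_le_bound _ (ContinuousLinearMap.opNorm_nonneg _) ?_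
  intro v
  let w : PiLp 2 (fun _ : Fin n => H') :=
    (WithLp.equiv 2 (∀ _ : Fin n, H')).symm (fun i => J (v i))
  have hwc : ∀ i, w i = J (v i) := fun i => rfl
  have hw : ‖w‖ = ‖v‖ := by
    refine norm_eq_of_sq_eq (norm_nonneg _) (norm_nonneg _) ?_
    rw [pi_norm_sq, pi_norm_sq]
    exact Finset.sum_congr rfl (fun i _ => by rw [hwc, J.norm_map])
  have key : ∀ i, amp T' w i = J (amp T v i) := by
    intro i
    rw [amp_apply, amp_apply, map_sum]
    refine Finset.sum_congr rfl (fun j _ => ?_)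
    rw [hwc]
    exact (hJT i j (v j)).symm
  have hnorm : ‖amp T v‖ = ‖amp T' w‖ := by
    refine norm_eq_of_sq_eq (norm_nonneg _) (norm_nonneg _) ?_
    rw [pi_norm_sq, pi_norm_sq]
    exact Finset.sum_congr rfl (fun i _ => by rw [key, J.norm_map])
  rw [hnorm, ← hw]
  exact (amp T').le_opNorm w

lemma amp_le_of_coisometry {Z : Type*} (p : Z → (H' →L[ℂ] H))
    (hp : ∀ v : H', HasSum (fun z => ‖p z v‖ ^ 2) (‖v‖ ^ 2))
    (T : Fin n → Fin n → (H →L[ℂ] H)) (T' : Fin n → Fin n → (H' →L[ℂ] H'))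
    (h : ∀ z i j v, p z (T' i j v) = T i j (p z v)) : ‖amp T'‖ ≤ ‖amp T‖ := by
  refine ContinuousLinearMap.opNorm_le_bound _ (ContinuousLinearMap.opNorm_nonneg _) ?_
  intro v
  let Pv : Z → PiLp 2 (fun _ : Fin n => H) :=
    fun z => (WithLp.equiv 2 (∀ _ : Fin n, H)).symm (fun i => p z (v i))
  have hPv : ∀ z i, Pv z i = p z (v i) := fun z i => rfl
  let Qv : Z → PiLp 2 (fun _ : Fin n => H) :=
    fun z => (WithLp.equiv 2 (∀ _ : Fin n, H)).symm (fun i => p z (amp T' v i))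
  have hQv : ∀ z i, Qv z i = p z (amp T' v i) := fun z i => rfl
  have h1 : HasSum (fun z => ‖Pv z‖ ^ 2) (‖v‖ ^ 2) := by
    have e1 : ∀ z, ‖Pv z‖ ^ 2 = ∑ i, ‖p z (v i)‖ ^ 2 := by
      intro z; rw [pi_norm_sq]
      exact Finset.sum_congr rfl (fun i _ => by rw [hPv])
    rw [pi_norm_sq]
    simp only [e1]
    exact hasSum_sum (fun i _ => hp (v i))
  have h2 : ∀ z, Qv z = amp T (Pv z) := by
    intro z
    refine PiLp.ext fun i => ?_
    rw [hQv, amp_apply T' v i, map_sum, amp_apply T (Pv z) i]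
    exact Finset.sum_congr rfl (fun j _ => h z i j (v j))
  have h3 : HasSum (fun z => ‖Qv z‖ ^ 2) (‖amp T' v‖ ^ 2) := by
    have e1 : ∀ z, ‖Qv z‖ ^ 2 = ∑ i, ‖p z (amp T' v i)‖ ^ 2 := by
      intro z; rw [pi_norm_sq]
      exact Finset.sum_congr rfl (fun i _ => by rw [hQv])
    rw [pi_norm_sq]
    simp only [e1]
    exact hasSum_sum (fun i _ => hp (amp T' v i))
  have h4 : HasSum (fun z => ‖amp T (Pv z)‖ ^ 2) (‖amp T' v‖ ^ 2) := by
    simpa only [h2] using h3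
  refine le_of_sq_le_sq' (by positivity) ?_ (norm_nonneg _)
  rw [mul_pow]
  calc ‖amp T' v‖ ^ 2 = ∑' z, ‖amp T (Pv z)‖ ^ 2 := h4.tsum_eq.symm
  _ ≤ ∑' z, ‖amp T‖ ^ 2 * ‖Pv z‖ ^ 2 := by
      refine h4.summable.tsum_le_tsum (fun z => ?_) (h1.summable.mul_left _)
      rw [← mul_pow]
      exact pow_le_pow_left₀ (norm_nonneg _) ((amp T).le_opNorm _) 2
  _ = ‖amp T‖ ^ 2 * ∑' z, ‖Pv z‖ ^ 2 := tsum_mul_left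
  _ = ‖amp T‖ ^ 2 * ‖v‖ ^ 2 := by rw [h1.tsum_eq]

lemma norm_le_of_isometry (J : H →ₗᵢ[ℂ] H') (A : H →L[ℂ] H) (A' : H' →L[ℂ] H')
    (h : ∀ v, J (A v) = A' (J v)) : ‖A‖ ≤ ‖A'‖ := by
  refine ContinuousLinearMap.opNorm_le_bound _ (ContinuousLinearMap.opNorm_nonneg _) ?_
  intro v
  rw [← J.norm_map (A v), h v, ← J.norm_map v]
  exact A'.le_opNorm _

lemma norm_le_of_coisometry {Z : Type*} (p : Z → (H' →L[ℂ] H))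
    (hp : ∀ v : H', HasSum (fun z => ‖p z v‖ ^ 2) (‖v‖ ^ 2))
    (A : H →L[ℂ] H) (A' : H' →L[ℂ] H')
    (h : ∀ z v, p z (A' v) = A (p z v)) : ‖A'‖ ≤ ‖A‖ := by
  refine ContinuousLinearMap.opNorm_le_bound _ (ContinuousLinearMap.opNorm_nonneg _) ?_
  intro v
  have h4 : HasSum (fun z => ‖A (p z v)‖ ^ 2) (‖A' v‖ ^ 2) := by
    simpa only [h] using hp (A' v)
  refine le_of_sq_le_sq' (by positivity) ?_ (norm_nonneg _)
  rw [mul_pow]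
  calc ‖A' v‖ ^ 2 = ∑' z, ‖A (p z v)‖ ^ 2 := h4.tsum_eq.symm
  _ ≤ ∑' z, ‖A‖ ^ 2 * ‖p z v‖ ^ 2 := by
      refine h4.summable.tsum_le_tsum (fun z => ?_) ((hp v).summable.mul_left _)
      rw [← mul_pow]
      exact pow_le_pow_left₀ (norm_nonneg _) (A.le_opNorm _) 2
  _ = ‖A‖ ^ 2 * ∑' z, ‖p z v‖ ^ 2 := tsum_mul_left
  _ = ‖A‖ ^ 2 * ‖v‖ ^ 2 := by rw [(hp v).tsum_eq]

end Amp

section Helpers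

/-- A sub-additive norm-bounded map is continuous. -/
lemma cont_of_bound {E F : Type*} [NormedAddCommGroup E] [NormedAddCommGroup F]
    (f : E → F) (C : ℝ) (hsub : ∀ a b, f (a - b) = f a - f b)
    (hb : ∀ x, ‖f x‖ ≤ C * ‖x‖) : Continuous f := by
  have : LipschitzWith (Real.toNNReal C) f := by
    refine LipschitzWith.of_dist_le_mul fun a b => ?_
    rw [dist_eq_norm, dist_eq_norm, ← hsub]
    refine (hb _).trans ?_
    exact mul_le_mul_of_nonneg_right (Real.le_coe_toNNReal C) (norm_nonneg _)
  exact this.continuous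

/-- Intertwining relations between generators extend to the lifted maps on the free algebra. -/
lemma intertwine_lift {H H' PP : Type*} [NormedAddCommGroup H] [NormedSpace ℂ H]
    [NormedAddCommGroup H'] [NormedSpace ℂ H']
    (V : PP → (H →L[ℂ] H)) (V' : PP → (H' →L[ℂ] H')) (W : H →L[ℂ] H')
    (hgen : ∀ p, W ∘L V p = V' p ∘L W) (x : FreeAlgebra ℂ PP) :
    W ∘L (FreeAlgebra.lift ℂ V x) = (FreeAlgebra.lift ℂ V' x) ∘L W := by
  induction x using FreeAlgebra.induction with
  | grade0 r =>
    rw [AlgHom.commutes, AlgHom.commutes]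
    simp only [Algebra.algebraMap_eq_smul_one,
      ContinuousLinearMap.smul_comp, ContinuousLinearMap.comp_smul,
      ContinuousLinearMap.one_def, ContinuousLinearMap.comp_id,
      ContinuousLinearMap.id_comp]
  | grade1 p =>
    rw [FreeAlgebra.lift_ι_apply, FreeAlgebra.lift_ι_apply]
    exact hgen p
  | mul a b ha hb =>
    rw [map_mul, map_mul, ContinuousLinearMap.mul_def, ContinuousLinearMap.mul_def,
      ← ContinuousLinearMap.comp_assoc, ha, ContinuousLinearMap.comp_assoc, hb,
      ← ContinuousLinearMap.comp_assoc]
  | add a b ha hb =>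
    rw [map_add, map_add, ContinuousLinearMap.comp_add, ContinuousLinearMap.add_comp,
      ha, hb]

end Helpers


/-- **(Theorem 5.1.)**  The non-selfadjoint norm-closed algebra `𝒯̄_λ(P)⁺` generated by the
enhanced left regular representation is completely isometrically isomorphic to the tensor
algebra `𝒯_λ(P)⁺` via a map sending generators to generators. -/
theorem tensorAlgebra_iso_enhanced (P : Submonoid G)
    (L : P → (l2 P →L[ℂ] l2 P))
    (hL : ∀ p q : P, L p (ket q) = ket (p * q))
    (Lbar : P → (l2 (PTuples P) →L[ℂ] l2 (PTuples P)))
    (hLbar : ∀ (p : P) (x : PTuples P), Lbar p (ket x) = ket (pMul P p x)) :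
    ∃ ψ : (Algebra.adjoin ℂ (Set.range L)).topologicalClosure →ₐ[ℂ]
        (Algebra.adjoin ℂ (Set.range Lbar)).topologicalClosure,
      Function.Bijective ψ ∧
      (∀ (p : P) (h : L p ∈ (Algebra.adjoin ℂ (Set.range L)).topologicalClosure)
        (h' : Lbar p ∈ (Algebra.adjoin ℂ (Set.range Lbar)).topologicalClosure),
        ψ ⟨L p, h⟩ = ⟨Lbar p, h'⟩) ∧
      (∀ (n : ℕ) (T : Fin n → Fin n →
          (Algebra.adjoin ℂ (Set.range L)).topologicalClosure),
        ‖amp (fun i j => ((ψ (T i j) : l2 (PTuples P) →L[ℂ] l2 (PTuples P))))‖ =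
          ‖amp (fun i j => ((T i j : l2 P →L[ℂ] l2 P)))‖) := by
  classical
  -- Index sets
  let X := PTuples P
  let Z : Type _ := Σ n : ℕ, Fin (n + 1) → G
  -- the embedding of `ℓ²(P)` as the first summand of `ℓ²(X)`
  let ι₀ : P → X := fun q => ⟨0, fun _ => q⟩
  have hι₀ : Function.Injective ι₀ := by
    intro q q' h
    have h2 := (Sigma.mk.inj_iff.mp h).2
    exact congrFun (eq_of_heq h2) 0
  let J₀ : l2 P →ₗᵢ[ℂ] l2 X := embed ι₀ hι₀
  let J : l2 P →L[ℂ] l2 X := J₀.toContinuousLinearMap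
  have hJ : ∀ ξ, J ξ = J₀ ξ := fun ξ => rfl
  -- the embedding of `ℓ²(X)` into `ℓ²(Z × P)`
  let Φ : X → Z × P := fun x =>
    (⟨x.1, fun i => ((x.2 0 : G))⁻¹ * (x.2 i : G)⟩, x.2 0)
  have hΦ : Function.Injective Φ := by
    rintro ⟨n, u⟩ ⟨m, v⟩ h
    have h1 : u 0 = v 0 := congrArg Prod.snd h
    have hz := congrArg Prod.fst h
    have hn : n = m := (Sigma.mk.inj_iff.mp hz).1
    subst hn
    have h2 := eq_of_heq (Sigma.mk.inj_iff.mp hz).2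
    refine Sigma.ext rfl (heq_of_eq (funext fun i => ?_))
    have h3 := congrFun h2 i
    dsimp at h3
    have h1' : (u 0 : G) = v 0 := congrArg _ h1
    have : (u i : G) = v i := by
      have h4 : ((u 0 : G)) * ((u 0 : G)⁻¹ * (u i : G))
          = ((u 0 : G)) * ((v 0 : G)⁻¹ * (v i : G)) := by rw [h3]
      rw [h1'] at h4
      simpa using h4
    exact Subtype.ext this
  let U₀ : l2 X →ₗᵢ[ℂ] l2 (Z × P) := embed Φ hΦ
  let U : l2 X →L[ℂ] l2 (Z × P) := U₀.toContinuousLinearMap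
  -- the amplified shifts on `ℓ²(Z × P)`
  let mulP : P → (Z × P) → (Z × P) := fun p zq => (zq.1, p * zq.2)
  have hmulP : ∀ p, Function.Injective (mulP p) := by
    intro p zq zq' h
    have h' : (zq.1, p * zq.2) = (zq'.1, p * zq'.2) := h
    rw [Prod.mk.injEq] at h'
    obtain ⟨h1, h2⟩ := h'
    have h2' : zq.2 = zq'.2 := by
      have := congrArg (fun t : P => ((t : G))) h2
      simp only [Submonoid.coe_mul] at this
      exact Subtype.ext (mul_left_cancel this)
    exact Prod.ext h1 h2'
  let M : P → (l2 (Z × P) →L[ℂ] l2 (Z × P)) :=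
    fun p => (embed (mulP p) (hmulP p)).toContinuousLinearMap
  -- the three liftings of the free algebra
  let F := FreeAlgebra ℂ P
  let φ : F →ₐ[ℂ] (l2 P →L[ℂ] l2 P) := FreeAlgebra.lift ℂ L
  let φ' : F →ₐ[ℂ] (l2 X →L[ℂ] l2 X) := FreeAlgebra.lift ℂ Lbar
  let μ : F →ₐ[ℂ] (l2 (Z × P) →L[ℂ] l2 (Z × P)) := FreeAlgebra.lift ℂ M
  -- generator intertwinings
  have gen1 : ∀ p, J ∘L L p = Lbar p ∘L J := by
    intro p
    apply clm_ext_ket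
    intro q
    rw [ContinuousLinearMap.comp_apply, ContinuousLinearMap.comp_apply, hL, hJ, hJ,
      embed_ket, embed_ket, hLbar]
    rfl
  have gen2 : ∀ p, U ∘L Lbar p = M p ∘L U := by
    intro p
    apply clm_ext_ket
    intro x
    rw [ContinuousLinearMap.comp_apply, ContinuousLinearMap.comp_apply, hLbar]
    show U₀ (ket (pMul P p x)) = M p (U₀ (ket x))
    rw [embed_ket, embed_ket]
    show _ = (embed (mulP p) (hmulP p)) (ket (Φ x))
    rw [embed_ket]
    congr 1
    show Φ (pMul P p x) = mulP p (Φ x)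
    refine Prod.ext ?_ rfl
    refine Sigma.ext rfl (heq_of_eq (funext fun i => ?_))
    show ((p * x.2 0 : P) : G)⁻¹ * ((p * x.2 i : P) : G) = ((x.2 0 : G))⁻¹ * (x.2 i : G)
    push_cast
    group
  have gen3 : ∀ (z : Z) (p : P), sliceL z ∘L M p = L p ∘L sliceL z := by
    intro z p
    apply clm_ext_ket
    rintro ⟨z', q⟩
    rw [ContinuousLinearMap.comp_apply, ContinuousLinearMap.comp_apply]
    show sliceL z ((embed (mulP p) (hmulP p)) (ket (z', q))) = L p (sliceL z (ket (z', q)))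
    rw [embed_ket, sliceL_ket, sliceL_ket]
    by_cases h : z' = z
    · rw [if_pos h, if_pos h, hL]
    · rw [if_neg h, if_neg h, map_zero]
  -- the intertwinings for all elements of the free algebra
  have I1 : ∀ x, J ∘L φ x = φ' x ∘L J := intertwine_lift L Lbar J gen1
  have I2 : ∀ x, U ∘L φ' x = μ x ∘L U := intertwine_lift Lbar M U gen2
  have I3 : ∀ (z : Z) (x), sliceL z ∘L μ x = φ x ∘L sliceL z :=
    fun z => intertwine_lift M L (sliceL z) (gen3 z)
  -- scalar norm equality for polynomials
  have keyS : ∀ x : F, ‖φ' x‖ = ‖φ x‖ := by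
    intro x
    refine le_antisymm ?_ ?_
    · refine le_trans (norm_le_of_isometry U₀ (φ' x) (μ x) ?_) ?_
      · intro v
        exact congrFun (congrArg (fun (A : l2 X →L[ℂ] l2 (Z × P)) => ⇑A) (I2 x)) v
      · refine norm_le_of_coisometry (fun z : Z => sliceL z) (fun η => sliceL_parseval η)
          (φ x) (μ x) ?_
        intro z v
        exact congrFun (congrArg (fun (A : l2 (Z × P) →L[ℂ] l2 P) => ⇑A) (I3 z x)) v
    · refine norm_le_of_isometry J₀ (φ x) (φ' x) ?_
      intro v
      exact congrFun (congrArg (fun (A : l2 P →L[ℂ] l2 X) => ⇑A) (I1 x)) v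
  -- matrix norm equality for polynomials
  have keyM : ∀ (n : ℕ) (T : Fin n → Fin n → F),
      ‖amp (fun i j => φ' (T i j))‖ = ‖amp (fun i j => φ (T i j))‖ := by
    intro n T
    refine le_antisymm ?_ ?_
    · refine le_trans (amp_le_of_isometry U₀ (fun i j => φ' (T i j))
        (fun i j => μ (T i j)) ?_) ?_
      · intro i j v
        exact congrFun (congrArg (fun (A : l2 X →L[ℂ] l2 (Z × P)) => ⇑A) (I2 (T i j))) v
      · refine amp_le_of_coisometry (fun z : Z => sliceL z) (fun η => sliceL_parseval η)
          (fun i j => φ (T i j)) (fun i j => μ (T i j)) ?_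
        intro z i j v
        exact congrFun (congrArg (fun (A : l2 (Z × P) →L[ℂ] l2 P) => ⇑A) (I3 z (T i j))) v
    · refine amp_le_of_isometry J₀ (fun i j => φ (T i j)) (fun i j => φ' (T i j)) ?_
      intro i j v
      exact congrFun (congrArg (fun (A : l2 P →L[ℂ] l2 X) => ⇑A) (I1 (T i j))) v
  -- the compression map
  let Jadj : l2 X →L[ℂ] l2 P := ContinuousLinearMap.adjoint J
  have hJJ : Jadj ∘L J = 1 := by
    refine ContinuousLinearMap.ext fun v => ?_
    refine ext_inner_left ℂ fun w => ?_
    rw [ContinuousLinearMap.comp_apply]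
    rw [ContinuousLinearMap.adjoint_inner_right]
    show inner ℂ (J₀ w) (J₀ v) = _
    rw [J₀.inner_map_map]
    rfl
  let Θ : (l2 X →L[ℂ] l2 X) → (l2 P →L[ℂ] l2 P) := fun B' => Jadj ∘L (B' ∘L J)
  have hΘsub : ∀ a b, Θ (a - b) = Θ a - Θ b := by
    intro a b
    simp only [Θ, ContinuousLinearMap.sub_comp, ContinuousLinearMap.comp_sub]
  have hJnorm : ‖J‖ ≤ 1 := J₀.norm_toContinuousLinearMap_le
  have hJadjnorm : ‖Jadj‖ ≤ 1 := by
    have := ContinuousLinearMap.adjoint.norm_map J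
    show ‖ContinuousLinearMap.adjoint J‖ ≤ 1
    rw [this]
    exact hJnorm
  have hΘbound : ∀ B', ‖Θ B'‖ ≤ ‖B'‖ := by
    intro B'
    calc ‖Jadj ∘L (B' ∘L J)‖ ≤ ‖Jadj‖ * ‖B' ∘L J‖ := ContinuousLinearMap.opNorm_comp_le _ _
    _ ≤ ‖Jadj‖ * (‖B'‖ * ‖J‖) := by
        refine mul_le_mul_of_nonneg_left (ContinuousLinearMap.opNorm_comp_le _ _)
          (norm_nonneg _)
    _ ≤ 1 * (‖B'‖ * 1) := by
        refine mul_le_mul hJadjnorm ?_ (by positivity) (by norm_num)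
        exact mul_le_mul_of_nonneg_left hJnorm (norm_nonneg _)
    _ = ‖B'‖ := by ring
  have hΘcont : Continuous Θ := cont_of_bound Θ 1 hΘsub (fun x => by
    rw [one_mul]; exact hΘbound x)
  have hΘφ : ∀ x : F, Θ (φ' x) = φ x := by
    intro x
    show Jadj ∘L (φ' x ∘L J) = φ x
    rw [← I1 x, ← ContinuousLinearMap.comp_assoc, hJJ, ContinuousLinearMap.one_def,
      ContinuousLinearMap.id_comp]
  have hΘone : Θ 1 = 1 := by
    have := hΘφ 1
    rwa [map_one, map_one] at this
  -- the closures as sets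
  have hsetA : ((Algebra.adjoin ℂ (Set.range L)).topologicalClosure : Set _) =
      closure (Set.range ⇑φ) := by
    rw [Subalgebra.topologicalClosure_coe,
      Algebra.adjoin_range_eq_range_freeAlgebra_lift ℂ P L]
    rfl
  have hsetA' : ((Algebra.adjoin ℂ (Set.range Lbar)).topologicalClosure : Set _) =
      closure (Set.range ⇑φ') := by
    rw [Subalgebra.topologicalClosure_coe,
      Algebra.adjoin_range_eq_range_freeAlgebra_lift ℂ P Lbar]
    rfl
  have memA : ∀ {A}, A ∈ (Algebra.adjoin ℂ (Set.range L)).topologicalClosure ↔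
      A ∈ closure (Set.range ⇑φ) := by
    intro A
    constructor
    · intro h; rw [← hsetA]; exact h
    · intro h; have : A ∈ ((Algebra.adjoin ℂ (Set.range L)).topologicalClosure : Set _) := by
        rw [hsetA]; exact h
      exact this
  have memA' : ∀ {A}, A ∈ (Algebra.adjoin ℂ (Set.range Lbar)).topologicalClosure ↔
      A ∈ closure (Set.range ⇑φ') := by
    intro A
    constructor
    · intro h; rw [← hsetA']; exact h
    · intro h; have : A ∈ ((Algebra.adjoin ℂ (Set.range Lbar)).topologicalClosure : Set _) := by
        rw [hsetA']; exact h
      exact this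
  -- closure-level facts
  have hJinv : ∀ B' ∈ closure (Set.range ⇑φ'), J ∘L Θ B' = B' ∘L J := by
    have hclosed : IsClosed {B' : l2 X →L[ℂ] l2 X | J ∘L Θ B' = B' ∘L J} := by
      refine isClosed_eq ?_ ?_
      · refine cont_of_bound _ 1 (fun a b => by rw [hΘsub]; exact
          (ContinuousLinearMap.comp_sub _ _ _)) ?_
        intro x
        rw [one_mul]
        calc ‖J ∘L Θ x‖ ≤ ‖J‖ * ‖Θ x‖ := ContinuousLinearMap.opNorm_comp_le _ _
        _ ≤ 1 * ‖x‖ := mul_le_mul hJnorm (hΘbound x) (norm_nonneg _) (by norm_num)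
        _ = ‖x‖ := one_mul _
      · refine cont_of_bound _ 1 (fun a b => ContinuousLinearMap.sub_comp _ _ _) ?_
        intro x
        rw [one_mul]
        calc ‖x ∘L J‖ ≤ ‖x‖ * ‖J‖ := ContinuousLinearMap.opNorm_comp_le _ _
        _ ≤ ‖x‖ * 1 := mul_le_mul_of_nonneg_left hJnorm (norm_nonneg _)
        _ = ‖x‖ := mul_one _
    have hsub' : Set.range ⇑φ' ⊆ {B' : l2 X →L[ℂ] l2 X | J ∘L Θ B' = B' ∘L J} := by
      rintro _ ⟨x, rfl⟩
      show J ∘L Θ (φ' x) = φ' x ∘L J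
      rw [hΘφ, I1]
    exact fun B' hB' => closure_minimal hsub' hclosed hB'
  have hiso : ∀ B' ∈ closure (Set.range ⇑φ'), ‖Θ B'‖ = ‖B'‖ := by
    have hclosed : IsClosed {B' : l2 X →L[ℂ] l2 X | ‖Θ B'‖ = ‖B'‖} :=
      isClosed_eq (continuous_norm.comp hΘcont) continuous_norm
    have hsub' : Set.range ⇑φ' ⊆ {B' : l2 X →L[ℂ] l2 X | ‖Θ B'‖ = ‖B'‖} := by
      rintro _ ⟨x, rfl⟩
      show ‖Θ (φ' x)‖ = ‖φ' x‖
      rw [hΘφ, keyS]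
    exact fun B' hB' => closure_minimal hsub' hclosed hB'
  have hmaps : ∀ B' ∈ closure (Set.range ⇑φ'), Θ B' ∈ closure (Set.range ⇑φ) := by
    intro B' hB'
    refine map_mem_closure hΘcont hB' ?_
    rintro _ ⟨x, rfl⟩
    exact ⟨x, (hΘφ x).symm⟩
  -- the algebra homomorphism `Θalg` from the closed algebra of `Lbar` to that of `L`
  let Θalg : (Algebra.adjoin ℂ (Set.range Lbar)).topologicalClosure →ₐ[ℂ]
      (Algebra.adjoin ℂ (Set.range L)).topologicalClosure :=
  { toFun := fun A' => ⟨Θ A'.1, memA.mpr (hmaps A'.1 (memA'.mp A'.2))⟩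
    map_one' := by
      refine Subtype.ext ?_
      show Θ 1 = 1
      exact hΘone
    map_mul' := by
      intro a b
      refine Subtype.ext ?_
      show Θ (a.1 * b.1) = Θ a.1 * Θ b.1
      have hmul : a.1 * b.1 = a.1 ∘L b.1 := rfl
      have hmul2 : Θ a.1 * Θ b.1 = Θ a.1 ∘L Θ b.1 := rfl
      rw [hmul, hmul2]
      show Jadj ∘L ((a.1 ∘L b.1) ∘L J) = _
      rw [ContinuousLinearMap.comp_assoc, ← hJinv b.1 (memA'.mp b.2),
        ← ContinuousLinearMap.comp_assoc a.1, ← ContinuousLinearMap.comp_assoc]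
    map_zero' := by
      refine Subtype.ext ?_
      show Θ 0 = 0
      simp only [Θ, ContinuousLinearMap.zero_comp, ContinuousLinearMap.comp_zero]
    map_add' := by
      intro a b
      refine Subtype.ext ?_
      show Θ (a.1 + b.1) = Θ a.1 + Θ b.1
      simp only [Θ, ContinuousLinearMap.add_comp, ContinuousLinearMap.comp_add]
    commutes' := by
      intro r
      refine Subtype.ext ?_
      show Θ (algebraMap ℂ _ r : l2 X →L[ℂ] l2 X) = (algebraMap ℂ _ r : l2 P →L[ℂ] l2 P)
      rw [Algebra.algebraMap_eq_smul_one, Algebra.algebraMap_eq_smul_one]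
      show Jadj ∘L ((r • (1 : l2 X →L[ℂ] l2 X)) ∘L J) = r • 1
      rw [ContinuousLinearMap.smul_comp, ContinuousLinearMap.comp_smul,
        ContinuousLinearMap.one_def, ContinuousLinearMap.id_comp]
      rw [show Jadj ∘L J = 1 from hJJ]
  }
  have hΘalg_coe : ∀ A', ((Θalg A' : (Algebra.adjoin ℂ (Set.range L)).topologicalClosure) :
      l2 P →L[ℂ] l2 P) = Θ A'.1 := fun A' => rfl
  -- injectivity
  have hinj : Function.Injective Θalg := by
    intro a b h
    have h1 : Θ a.1 = Θ b.1 := congrArg Subtype.val h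
    have h2 : Θ (a.1 - b.1) = 0 := by rw [hΘsub, h1, sub_self]
    have h3 : a.1 - b.1 ∈ closure (Set.range ⇑φ') :=
      memA'.mp (sub_mem a.2 b.2)
    have h4 := hiso _ h3
    rw [h2, norm_zero] at h4
    have h5 : a.1 - b.1 = 0 := by
      have h6 := h4.symm
      rwa [norm_eq_zero] at h6
    exact Subtype.ext (sub_eq_zero.mp h5)
  -- surjectivity
  have hsurj : Function.Surjective Θalg := by
    rintro ⟨A, hA⟩
    have hA' : A ∈ closure (Set.range ⇑φ) := memA.mp hA
    obtain ⟨u, hu1, hu2⟩ := mem_closure_iff_seq_limit.mp hA'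
    choose x hx using hu1
    let u' : ℕ → (l2 X →L[ℂ] l2 X) := fun n => φ' (x n)
    have hdist : ∀ m n, dist (u' m) (u' n) = dist (u m) (u n) := by
      intro m n
      rw [dist_eq_norm, dist_eq_norm]
      have : u' m - u' n = φ' (x m - x n) := by rw [map_sub]
      rw [this, keyS, map_sub, hx, hx]
    have hc : CauchySeq u := hu2.cauchySeq
    have hc' : CauchySeq u' := by
      rw [Metric.cauchySeq_iff] at hc ⊢
      intro ε hε
      obtain ⟨N, hN⟩ := hc ε hε
      exact ⟨N, fun m hm n hn => by rw [hdist]; exact hN m hm n hn⟩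
    obtain ⟨B', hB'⟩ := cauchySeq_tendsto_of_complete hc'
    have hB'mem : B' ∈ closure (Set.range ⇑φ') :=
      mem_closure_of_tendsto hB' (Filter.Eventually.of_forall fun n => ⟨x n, rfl⟩)
    have hΘB' : Θ B' = A := by
      have h1 : Filter.Tendsto (fun n => Θ (u' n)) Filter.atTop (nhds (Θ B')) :=
        (hΘcont.tendsto B').comp hB'
      have h2 : (fun n => Θ (u' n)) = u := by
        funext n
        show Θ (φ' (x n)) = u n
        rw [hΘφ, hx]
      rw [h2] at h1
      exact tendsto_nhds_unique h1 hu2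
    exact ⟨⟨B', memA'.mpr hB'mem⟩, Subtype.ext hΘB'⟩
  -- invert
  let e := AlgEquiv.ofBijective Θalg ⟨hinj, hsurj⟩
  refine ⟨e.symm.toAlgHom, e.symm.bijective, ?_, ?_⟩
  · intro p h h'
    have : e ⟨Lbar p, h'⟩ = ⟨L p, h⟩ := by
      refine Subtype.ext ?_
      show Θ (Lbar p) = L p
      have h1 : Lbar p = φ' (FreeAlgebra.ι ℂ p) := (FreeAlgebra.lift_ι_apply _ _).symm
      have h2 : L p = φ (FreeAlgebra.ι ℂ p) := (FreeAlgebra.lift_ι_apply _ _).symm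
      rw [h1, h2, hΘφ]
    show e.symm ⟨L p, h⟩ = ⟨Lbar p, h'⟩
    rw [← this, AlgEquiv.symm_apply_apply]
  · -- complete isometry
    intro n T
    -- general fact: `Θ` preserves the matrix norms on the closure
    have key : ∀ (S : Fin n → Fin n → (l2 X →L[ℂ] l2 X)),
        (∀ i j, S i j ∈ closure (Set.range ⇑φ')) →
        ‖amp (fun i j => Θ (S i j))‖ = ‖amp S‖ := by
      intro S hS
      refine eq_of_forall_dist_le ?_
      intro ε hε
      set ε' : ℝ := ε / (2 * ((n : ℝ) * (n : ℝ) + 1)) with hε'def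
      have hε' : 0 < ε' := by
        apply div_pos hε
        positivity
      have hchoose : ∀ i j, ∃ y : F, ‖S i j - φ' y‖ < ε' := by
        intro i j
        obtain ⟨y, hy1, hy2⟩ := Metric.mem_closure_iff.mp (hS i j) ε' hε'
        obtain ⟨x, rfl⟩ := hy1
        exact ⟨x, by rwa [dist_eq_norm] at hy2⟩
      choose x hxx using hchoose
      have bound1 : ‖amp S - amp (fun i j => φ' (x i j))‖ ≤ (n : ℝ) * (n : ℝ) * ε' := by
        rw [← amp_sub]
        refine (amp_norm_le _).trans ?_
        calc ∑ i, ∑ j, ‖S i j - φ' (x i j)‖ ≤ ∑ _i : Fin n, ∑ _j : Fin n, ε' := by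
              refine Finset.sum_le_sum fun i _ => Finset.sum_le_sum fun j _ => ?_
              exact le_of_lt (hxx i j)
        _ = (n : ℝ) * (n : ℝ) * ε' := by
              simp [Finset.sum_const, Finset.card_univ]
              ring
      have bound2 : ‖amp (fun i j => Θ (S i j)) - amp (fun i j => φ (x i j))‖
          ≤ (n : ℝ) * (n : ℝ) * ε' := by
        have he : ∀ i j, Θ (S i j) - φ (x i j) = Θ (S i j - φ' (x i j)) := by
          intro i j
          rw [hΘsub, hΘφ]
        rw [← amp_sub]
        refine (amp_norm_le _).trans ?_
        calc ∑ i, ∑ j, ‖Θ (S i j) - φ (x i j)‖ ≤ ∑ _i : Fin n, ∑ _j : Fin n, ε' := by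
              refine Finset.sum_le_sum fun i _ => Finset.sum_le_sum fun j _ => ?_
              rw [he]
              exact le_of_lt (lt_of_le_of_lt (hΘbound _) (hxx i j))
        _ = (n : ℝ) * (n : ℝ) * ε' := by
              simp [Finset.sum_const, Finset.card_univ]
              ring
      have hcenter : ‖amp (fun i j => φ' (x i j))‖ = ‖amp (fun i j => φ (x i j))‖ :=
        keyM n x
      rw [Real.dist_eq]
      have habs1 : |‖amp (fun i j => Θ (S i j))‖ - ‖amp (fun i j => φ (x i j))‖|
          ≤ (n : ℝ) * (n : ℝ) * ε' :=
        le_trans (abs_norm_sub_norm_le _ _) bound2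
      have habs2 : |‖amp S‖ - ‖amp (fun i j => φ' (x i j))‖|
          ≤ (n : ℝ) * (n : ℝ) * ε' :=
        le_trans (abs_norm_sub_norm_le _ _) bound1
      have : |‖amp (fun i j => Θ (S i j))‖ - ‖amp S‖|
          ≤ 2 * ((n : ℝ) * (n : ℝ)) * ε' := by
        rw [hcenter] at habs2
        have htri := abs_sub_le (‖amp (fun i j => Θ (S i j))‖)
          (‖amp (fun i j => φ (x i j))‖) (‖amp S‖)
        refine htri.trans ?_
        have h3 : |‖amp (fun i j => φ (x i j))‖ - ‖amp S‖|
            ≤ (n : ℝ) * (n : ℝ) * ε' := by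
          rw [abs_sub_comm]
          exact habs2
        nlinarith [habs1, h3]
      refine this.trans ?_
      rw [hε'def]
      rw [div_eq_inv_mul]
      have hpos : (0:ℝ) < 2 * ((n : ℝ) * (n : ℝ) + 1) := by positivity
      rw [show 2 * ((n : ℝ) * (n : ℝ)) * ((2 * ((n : ℝ) * (n : ℝ) + 1))⁻¹ * ε)
          = (2 * ((n : ℝ) * (n : ℝ)) / (2 * ((n : ℝ) * (n : ℝ) + 1))) * ε by ring]
      have hq : 2 * ((n : ℝ) * (n : ℝ)) / (2 * ((n : ℝ) * (n : ℝ) + 1)) ≤ 1 := by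
        rw [div_le_one hpos]
        nlinarith
      calc (2 * ((n : ℝ) * (n : ℝ)) / (2 * ((n : ℝ) * (n : ℝ) + 1))) * ε ≤ 1 * ε :=
            mul_le_mul_of_nonneg_right hq hε.le
      _ = ε := one_mul ε
    -- apply to `S i j := ψ (T i j)`
    have happ : ∀ i j, ((T i j : _) : l2 P →L[ℂ] l2 P)
        = Θ ((e.symm (T i j) : _) : l2 X →L[ℂ] l2 X) := by
      intro i j
      have h1 : e (e.symm (T i j)) = T i j := e.apply_symm_apply _
      have h2 : ((e (e.symm (T i j)) : _) : l2 P →L[ℂ] l2 P)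
          = Θ ((e.symm (T i j) : _) : l2 X →L[ℂ] l2 X) := rfl
      have h3 := congrArg
        (fun A : (Algebra.adjoin ℂ (Set.range L)).topologicalClosure =>
          ((A : _) : l2 P →L[ℂ] l2 P)) h1
      exact h3.symm.trans h2
    have hmem2 : ∀ i j, ((e.symm (T i j) : _) : l2 X →L[ℂ] l2 X) ∈
        closure (Set.range ⇑φ') := fun i j => memA'.mp (e.symm (T i j)).2
    have hkey := key (fun i j => ((e.symm (T i j) : _) : l2 X →L[ℂ] l2 X)) hmem2
    have heq : (fun i j => Θ ((fun (i j : Fin n) =>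
          ((e.symm (T i j) : _) : l2 X →L[ℂ] l2 X)) i j))
        = (fun i j => ((T i j : _) : l2 P →L[ℂ] l2 P)) := by
      funext i j
      exact (happ i j).symm
    rw [heq] at hkey
    exact hkey.symm


end
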